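/- Define the left virtual curl L = (capL ⊗ id_V) ∘ (id_{V*} ⊗ τ) ∘ (cupL ⊗ id_V) and the right virtual curl R = (id_V ⊗ capR) ∘ (τ ⊗ id_{V*}) ∘ (id_V ⊗ cupR), both K-linear endomorphisms of V. Then L(x_i) = q^{m−n+1−2i}·x_i for i ≤ m and L(x_i) = q^{−n−3m−1+2i}·x_i for i > m; R(x_i) = q^{−m+n−1+2i}·x_i for i ≤ m and R(x_i) = q^{3m+n+1−2i}·x_i for i > m; consequently L ∘ R = R ∘ L = id_V. (Invariance of the virtual U_q(gl(m|n)) functor under the rotational move VR_1^{rot}.) -/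

import Mathlib

/-!
STATEMENT 6: the left and right virtual curls, built from the (co)evaluation maps and the
q-deformed graded switch τ, are mutually inverse diagonal endomorphisms of V with the stated
diagonal entries (invariance under the rotational move VR₁^{rot}).
Maps between tensor powers of V (and of its dual V*, whose basis x_k^* is also indexed by
Fin (m+n)) are represented by their matrices in the bases of pure tensors.
-/

noncomputable section

/-- The field `ℂ(q)` of rational functions in one variable over `ℂ`. -/
abbrev Kq : Type := RatFunc ℂ

/-- The variable `q ∈ ℂ(q)`. -/
def q : Kq := RatFunc.X

/-- The q-deformed graded switch `τ` on `V ⊗ V`: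
`τ(x_i ⊗ x_j) = x_j ⊗ x_i` if `i, j ≤ m`; `= q·x_j ⊗ x_i` if `j ≤ m < i`;
`= q⁻¹·x_j ⊗ x_i` if `i ≤ m < j`; `= −x_j ⊗ x_i` if `i, j > m`. -/
def tau (m n : ℕ) :
    Matrix (Fin (m + n) × Fin (m + n)) (Fin (m + n) × Fin (m + n)) Kq :=
  fun a x =>
    if a = (x.2, x.1) then
      (if (x.1 : ℕ) < m ∧ (x.2 : ℕ) < m then 1
       else if (x.2 : ℕ) < m ∧ m ≤ (x.1 : ℕ) then q
       else if (x.1 : ℕ) < m ∧ m ≤ (x.2 : ℕ) then q⁻¹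
       else -1)
    else 0

/-- The coefficients `μ_i` of the quantum-trace map: `μ_i = q^{−m+n−1+2i}` if `i ≤ m`,
`μ_i = −q^{3m+n+1−2i}` if `i > m` (paper 1-based index `i` is `(i : ℕ) + 1` here). -/
def mu (m n : ℕ) (i : Fin (m + n)) : Kq :=
  if (i : ℕ) < m then q ^ (-(m : ℤ) + (n : ℤ) - 1 + 2 * (((i : ℕ) : ℤ) + 1))
  else -q ^ (3 * (m : ℤ) + (n : ℤ) + 1 - 2 * (((i : ℕ) : ℤ) + 1))

/-- The coefficient of `x_k^* ⊗ x_k` in the left coevaluation `cupL(1)`: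
`cupL : K → V* ⊗ V`,
`1 ↦ q^{m−n}(Σ_{k=1}^{m} q^{1−2k} x_k^* ⊗ x_k − Σ_{k=m+1}^{m+n} q^{−4m−1+2k} x_k^* ⊗ x_k)`. -/
def cupLcoef (m n : ℕ) (k : Fin (m + n)) : Kq :=
  if (k : ℕ) < m then q ^ ((m : ℤ) - (n : ℤ)) * q ^ (1 - 2 * (((k : ℕ) : ℤ) + 1))
  else -(q ^ ((m : ℤ) - (n : ℤ)) * q ^ (-4 * (m : ℤ) - 1 + 2 * (((k : ℕ) : ℤ) + 1)))

/-- `cupL ⊗ id_V : V → V* ⊗ V ⊗ V`. -/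
def cupL1 (m n : ℕ) :
    Matrix (Fin (m + n) × Fin (m + n) × Fin (m + n)) (Fin (m + n)) Kq :=
  fun a x => (if a.1 = a.2.1 then cupLcoef m n a.1 else 0) * (if a.2.2 = x then 1 else 0)

/-- `id_{V*} ⊗ τ : V* ⊗ V ⊗ V → V* ⊗ V ⊗ V`. -/
def tau23 (m n : ℕ) :
    Matrix (Fin (m + n) × Fin (m + n) × Fin (m + n))
      (Fin (m + n) × Fin (m + n) × Fin (m + n)) Kq :=
  fun a x => (if a.1 = x.1 then 1 else 0) * tau m n (a.2.1, a.2.2) (x.2.1, x.2.2)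

/-- `capL ⊗ id_V : V* ⊗ V ⊗ V → V`, where `capL : V* ⊗ V → K`, `x_i^* ⊗ x_j ↦ δ_{ij}`. -/
def capL1 (m n : ℕ) :
    Matrix (Fin (m + n)) (Fin (m + n) × Fin (m + n) × Fin (m + n)) Kq :=
  fun a x => (if x.1 = x.2.1 then 1 else 0) * (if a = x.2.2 then 1 else 0)

/-- The left virtual curl `L = (capL ⊗ id_V) ∘ (id_{V*} ⊗ τ) ∘ (cupL ⊗ id_V) : V → V`. -/
def leftCurl (m n : ℕ) : Matrix (Fin (m + n)) (Fin (m + n)) Kq :=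
  capL1 m n * tau23 m n * cupL1 m n

/-- `id_V ⊗ cupR : V → V ⊗ V ⊗ V*`, where `cupR : K → V ⊗ V*`, `1 ↦ Σ_k x_k ⊗ x_k^*`. -/
def cupR2 (m n : ℕ) :
    Matrix (Fin (m + n) × Fin (m + n) × Fin (m + n)) (Fin (m + n)) Kq :=
  fun a x => (if a.1 = x then 1 else 0) * (if a.2.1 = a.2.2 then 1 else 0)

/-- `τ ⊗ id_{V*} : V ⊗ V ⊗ V* → V ⊗ V ⊗ V*`. -/
def tau12 (m n : ℕ) :
    Matrix (Fin (m + n) × Fin (m + n) × Fin (m + n))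
      (Fin (m + n) × Fin (m + n) × Fin (m + n)) Kq :=
  fun a x => tau m n (a.1, a.2.1) (x.1, x.2.1) * (if a.2.2 = x.2.2 then 1 else 0)

/-- `id_V ⊗ capR : V ⊗ V ⊗ V* → V`, where `capR : V ⊗ V* → K`, `x_i ⊗ x_j^* ↦ δ_{ij}·μ_i`. -/
def capR2 (m n : ℕ) :
    Matrix (Fin (m + n)) (Fin (m + n) × Fin (m + n) × Fin (m + n)) Kq :=
  fun a x => (if a = x.1 then 1 else 0) * (if x.2.1 = x.2.2 then mu m n x.2.1 else 0)

/-- The right virtual curl `R = (id_V ⊗ capR) ∘ (τ ⊗ id_{V*}) ∘ (id_V ⊗ cupR) : V → V`. -/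
def rightCurl (m n : ℕ) : Matrix (Fin (m + n)) (Fin (m + n)) Kq :=
  capR2 m n * tau12 m n * cupR2 m n


lemma q_ne_zero : (q : Kq) ≠ 0 := RatFunc.X_ne_zero

lemma qpow_mul_qpow (a b : ℤ) (h : a + b = 0) : q ^ a * q ^ b = 1 := by
  rw [← zpow_add₀ q_ne_zero, h, zpow_zero]

lemma leftCurl_apply (m n : ℕ) (x i : Fin (m + n)) : leftCurl m n x i =
      (if x = i then
        (if (i : ℕ) < m then q ^ ((m : ℤ) - (n : ℤ) + 1 - 2 * (((i : ℕ) : ℤ) + 1))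
         else q ^ (-(n : ℤ) - 3 * (m : ℤ) - 1 + 2 * (((i : ℕ) : ℤ) + 1)))
      else 0) := by
  unfold leftCurl
  simp only [Matrix.mul_apply]
  unfold capL1 tau23 cupL1 tau cupLcoef
  simp [Matrix.mul_apply, Fintype.sum_prod_type, Finset.sum_ite_eq, Finset.sum_ite_eq',
    mul_ite, ite_mul, mul_zero, zero_mul, mul_one, one_mul, Prod.ext_iff, ite_and,
    Finset.mul_sum, Finset.sum_mul]
  rw [Finset.sum_eq_single i]
  · split_ifs <;>
      first
        | rfl
        | omega
        | (rw [← zpow_add₀ q_ne_zero]; congr 1; ring)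
        | (rw [neg_neg, ← zpow_add₀ q_ne_zero]; congr 1; ring)
        | simp_all
  · intro b _ hb
    split_ifs <;> simp_all
  · simp

lemma rightCurl_apply (m n : ℕ) (x i : Fin (m + n)) : rightCurl m n x i =
      (if x = i then
        (if (i : ℕ) < m then q ^ (-(m : ℤ) + (n : ℤ) - 1 + 2 * (((i : ℕ) : ℤ) + 1))
         else q ^ (3 * (m : ℤ) + (n : ℤ) + 1 - 2 * (((i : ℕ) : ℤ) + 1)))
      else 0) := by
  unfold rightCurl
  simp only [Matrix.mul_apply]
  unfold capR2 tau12 cupR2 tau mu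
  simp [Matrix.mul_apply, Fintype.sum_prod_type, Finset.sum_ite_eq, Finset.sum_ite_eq',
    mul_ite, ite_mul, mul_zero, zero_mul, mul_one, one_mul, Prod.ext_iff, ite_and,
    Finset.mul_sum, Finset.sum_mul]
  split_ifs with h1 <;>
  · rw [Finset.sum_eq_single i]
    · split_ifs <;> first | rfl | omega | simp_all
    · intro b _ hb; split_ifs <;> simp_all
    · simp

/-- the left and right virtual curls are the stated diagonal maps, and they are
mutually inverse. -/
theorem statement6 (m n : ℕ) (hmn : 1 ≤ m + n) :
    (∀ x i : Fin (m + n), leftCurl m n x i =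
      if x = i then
        (if (i : ℕ) < m then q ^ ((m : ℤ) - (n : ℤ) + 1 - 2 * (((i : ℕ) : ℤ) + 1))
         else q ^ (-(n : ℤ) - 3 * (m : ℤ) - 1 + 2 * (((i : ℕ) : ℤ) + 1)))
      else 0) ∧
    (∀ x i : Fin (m + n), rightCurl m n x i =
      if x = i then
        (if (i : ℕ) < m then q ^ (-(m : ℤ) + (n : ℤ) - 1 + 2 * (((i : ℕ) : ℤ) + 1))
         else q ^ (3 * (m : ℤ) + (n : ℤ) + 1 - 2 * (((i : ℕ) : ℤ) + 1)))
      else 0) ∧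
    leftCurl m n * rightCurl m n = 1 ∧ rightCurl m n * leftCurl m n = 1 := by
  refine ⟨leftCurl_apply m n, rightCurl_apply m n, ?_, ?_⟩ <;>
  · ext x i
    rw [Matrix.mul_apply]
    simp only [leftCurl_apply, rightCurl_apply, mul_ite, ite_mul, mul_zero, zero_mul,
      Matrix.one_apply]
    rw [Finset.sum_eq_single i]
    · split_ifs <;> first | rfl | (exact qpow_mul_qpow _ _ (by ring)) | simp_all
    · intro b _ hb; split_ifs <;> simp_all
    · simp

end
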